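/- Let K be a perfect field of characteristic 2 and V an n-dimensional vector space over K with n odd. Then any two non-degenerate symmetric bilinear forms on V are equivalent, i.e., for any two such forms B and B' there exists an invertible linear map M : V → V with B'(x,y) = B(Mx, My) for all x, y in V. -/

import Mathlib

open LinearMap (BilinForm)
open LinearMap.BilinForm Submodule Module

section Aux

variable {K : Type*} [Field K] [PerfectField K] [CharP K 2]

private lemma exists_sq' (a : K) : ∃ c : K, c ^ 2 = a := by
  haveI : ExpChar K 2 := ExpChar.prime Nat.prime_two
  exact ⟨(frobeniusEquiv K 2).symm a, frobeniusEquiv_symm_pow_p K 2 a⟩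

private lemma two_eq_zero' : (2 : K) = 0 := by
  exact_mod_cast (CharP.cast_eq_zero K 2)

private lemma cons_orthonormal {V : Type*} [AddCommGroup V] [Module K V]
    (B : BilinForm K V) {m : ℕ} (v : V) (rest : Fin m → V) (h1 : B v v = 1)
    (h2 : ∀ i, B v (rest i) = 0) (h3 : ∀ i, B (rest i) v = 0)
    (h4 : ∀ i j, B (rest i) (rest j) = if i = j then 1 else 0) :
    ∀ i j, B ((Fin.cons v rest : Fin (m+1) → V) i) ((Fin.cons v rest : Fin (m+1) → V) j) =
      if i = j then 1 else 0 := by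
  intro i j
  induction i using Fin.cases with
  | zero =>
    induction j using Fin.cases with
    | zero => simpa using h1
    | succ j => simpa [(Fin.succ_ne_zero j).symm] using h2 j
  | succ i =>
    induction j using Fin.cases with
    | zero => simpa [Fin.succ_ne_zero i] using h3 i
    | succ j => simpa [Fin.succ_inj] using h4 i j

private lemma orthonormal_family_basis {V : Type*} [AddCommGroup V] [Module K V]
    [FiniteDimensional K V] {n : ℕ} (hn : 0 < n) (hrank : finrank K V = n)
    (B : BilinForm K V) (f : Fin n → V)
    (hf : ∀ i j, B (f i) (f j) = if i = j then 1 else 0) :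
    ∃ b : Basis (Fin n) K V, ∀ i j, B (b i) (b j) = if i = j then 1 else 0 := by
  have : Nonempty (Fin n) := ⟨⟨0, hn⟩⟩
  have li : LinearIndependent K f := by
    refine linearIndependent_of_iIsOrtho (B := B) (iIsOrtho_def.mpr fun i j hij => ?_) fun i => ?_
    · simp [hf i j, hij]
    · simp [LinearMap.BilinForm.IsOrtho, hf i i]
  refine ⟨basisOfLinearIndependentOfCardEqFinrank li (by simp [hrank]), ?_⟩
  simp only [coe_basisOfLinearIndependentOfCardEqFinrank]
  exact hf

/-- A nondegenerate alternating (symmetric) bilinear space has even dimension. -/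
private lemma even_of_alt (n : ℕ) :
    ∀ (V : Type*) [AddCommGroup V] [Module K V] [FiniteDimensional K V],
    finrank K V = n → ∀ B : BilinForm K V, B.IsSymm → B.Nondegenerate →
    (∀ v, B v v = 0) → Even n := by
  induction n using Nat.strong_induction_on with
  | _ n IH =>
    intro V _ _ _ hrank B hsym hnd halt
    rcases Nat.eq_zero_or_pos n with h0 | hpos
    · simp [h0]
    have : Nontrivial V := by
      rw [← Module.finrank_pos_iff (R := K)]; omega
    obtain ⟨v, hv⟩ := exists_ne (0 : V)
    obtain ⟨w0, hw0⟩ : ∃ w, B v w ≠ 0 := by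
      by_contra h
      push_neg at h
      exact hv (hnd.1 v h)
    set g : V := (B v w0)⁻¹ • w0 with hg
    have hvg : B v g = 1 := by
      simp [hg, smul_right, inv_mul_cancel₀ hw0]
    have hgv : B g v = 1 := by rw [← hsym.eq v g]; simpa using hvg
    set U : Submodule K V := span K (Set.range ![v, g]) with hU
    have hmemv : v ∈ U := subset_span ⟨0, rfl⟩
    have hmemg : g ∈ U := subset_span ⟨1, rfl⟩
    have hUnd : (B.restrict U).Nondegenerate := by
      refine (LinearMap.IsRefl.nondegenerate_iff_separatingLeft (B := B.restrict U) (fun x y h => hsym.isRefl x y h)).mpr ?_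
      rintro ⟨x, hx⟩ hb
      obtain ⟨c, hc⟩ := (mem_span_range_iff_exists_fun K).mp hx
      have hb1 := hb ⟨v, hmemv⟩
      have hb2 := hb ⟨g, hmemg⟩
      simp only [restrict_apply] at hb1 hb2
      rw [← hc] at hb1 hb2
      simp [Fin.sum_univ_two, add_left, smul_left, halt, hgv, hvg] at hb1 hb2
      have : x = 0 := by rw [← hc]; simp [Fin.sum_univ_two, hb1, hb2]
      simpa using this
    have hcompl := isCompl_orthogonal_of_restrict_nondegenerate hsym.isRefl hUnd
    have hli : LinearIndependent K ![v, g] := by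
      rw [LinearIndependent.pair_iff]
      intro s t hst
      have h1 : B (s • v + t • g) g = s := by
        simp [add_left, smul_left, halt, hvg]
      have h2 : B (s • v + t • g) v = t := by
        simp [add_left, smul_left, halt, hgv]
      rw [hst] at h1 h2
      simp at h1 h2
      exact ⟨h1.symm, h2.symm⟩
    have hUr : finrank K U = 2 := by
      rw [hU, finrank_span_eq_card hli]; simp
    set W : Submodule K V := B.orthogonal U with hW
    have hWr : finrank K W = n - 2 := by
      rw [hW, finrank_orthogonal hnd, hUr, hrank]
    have hWnd : (B.restrict W).Nondegenerate := by
      apply nondegenerate_restrict_of_disjoint_orthogonal B hsym.isRefl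
      rw [hW, orthogonal_orthogonal hnd hsym.isRefl]
      exact hcompl.disjoint.symm
    have heven : Even (n - 2) := by
      refine IH (n - 2) (by omega) W hWr (B.restrict W) ?_ hWnd ?_
      · constructor; intro x y; simpa [restrict_apply] using hsym.eq x.1 y.1
      · intro x; simpa [restrict_apply] using halt x.1
    have h2n : 2 ≤ n := by
      have := finrank_le (R := K) (M := V) U
      omega
    obtain ⟨k, hk⟩ := heven
    exact ⟨k + 1, by omega⟩

set_option maxHeartbeats 1000000 in
/-- A nondegenerate symmetric non-alternating bilinear space over a perfect field
of characteristic 2 has an orthonormal basis. -/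
private lemma exists_orthonormal_basis (n : ℕ) :
    ∀ (V : Type*) [AddCommGroup V] [Module K V] [FiniteDimensional K V],
    finrank K V = n → ∀ B : BilinForm K V, B.IsSymm → B.Nondegenerate →
    (∃ v, B v v ≠ 0) →
    ∃ b : Basis (Fin n) K V, ∀ i j, B (b i) (b j) = if i = j then 1 else 0 := by
  induction n using Nat.strong_induction_on with
  | _ n IH =>
    intro V _ _ _ hrank B hsym hnd hex
    have h2K : (2 : K) = 0 := two_eq_zero'
    obtain ⟨v0, hv0⟩ := hex
    obtain ⟨c, hc⟩ := exists_sq' (B v0 v0)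
    have hcne : c ≠ 0 := by
      intro h; rw [h] at hc; simp at hc; exact hv0 hc.symm
    set v : V := c⁻¹ • v0 with hvdef
    have hvv : B v v = 1 := by
      rw [hvdef]
      rw [smul_left, smul_right, ← hc]
      field_simp
    have hvne : v ≠ 0 := by
      intro h; rw [h] at hvv; simp at hvv
    have hortho : ¬B.IsOrtho v v := by
      rw [isOrtho_def, hvv]; exact one_ne_zero
    set W : Submodule K V := B.orthogonal (K ∙ v) with hWdef
    have hWnd : (B.restrict W).Nondegenerate :=
      restrict_nondegenerate_orthogonal_spanSingleton B hnd hsym.isRefl hortho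
    have hWsym : (B.restrict W).IsSymm := by
      constructor; intro x y; simpa [restrict_apply] using hsym.eq x.1 y.1
    have hWr : finrank K W = n - 1 := by
      rw [hWdef, finrank_orthogonal hnd, finrank_span_singleton hvne, hrank]
    have hvW : ∀ w ∈ W, B v w = 0 := by
      intro w hw
      exact (mem_orthogonal_iff.mp hw) v (mem_span_singleton_self v)
    have hWv : ∀ w ∈ W, B w v = 0 := fun w hw => by
      rw [← hsym.eq v w]; simpa using hvW w hw
    have hn1 : 1 ≤ n := by
      have := finrank_pos_iff (R := K) (M := V)
      rcases Nat.eq_zero_or_pos n with h0 | h1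
      · exfalso
        rw [h0] at hrank
        have : v = 0 := by
          have : Subsingleton V := by
            rw [← Module.finrank_zero_iff (R := K)]; exact hrank
          exact Subsingleton.elim v 0
        exact hvne this
      · exact h1
    by_cases halt : ∀ w ∈ W, B w w = 0
    · -- B is alternating on W
      by_cases h1 : n = 1
      · subst h1
        refine orthonormal_family_basis one_pos hrank B ![v] fun i j => ?_
        have : i = j := Subsingleton.elim i j
        subst this
        simp [hvv]
      · -- n ≥ 2 : find a hyperbolic pair in W
        have h2n : 2 ≤ n := by omega
        have : Nontrivial W := by
          rw [← Module.finrank_pos_iff (R := K)]; omega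
        obtain ⟨f0, hf0⟩ := exists_ne (0 : W)
        obtain ⟨g0, hg0⟩ : ∃ g0 : W, B.restrict W f0 g0 ≠ 0 := by
          by_contra h
          push_neg at h
          exact hf0 (hWnd.1 f0 h)
        replace hg0 : B (f0 : V) (g0 : V) ≠ 0 := hg0
        set f : V := (f0 : V) with hfdef
        set g : V := (B (f0 : V) (g0 : V))⁻¹ • (g0 : V) with hgdef
        have hfW : f ∈ W := f0.2
        have hgW : g ∈ W := W.smul_mem _ g0.2
        have hfg : B f g = 1 := by
          rw [hgdef, smul_right, hfdef, inv_mul_cancel₀ hg0]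
        have hgf : B g f = 1 := by rw [← hsym.eq f g]; simpa using hfg
        have hff : B f f = 0 := halt f hfW
        have hgg : B g g = 0 := halt g hgW
        -- the new orthonormal pair and new witness vector
        set u1 : V := v + f with hu1
        set u2 : V := v + g with hu2
        set v' : V := v + f + g with hv'
        have e11 : B u1 u1 = 1 := by
          simp only [hu1, add_left, add_right, hvv, hff, hvW f hfW, hWv f hfW]
          first
            | ring1
            | linear_combination h2K
            | linear_combination -h2K
        have e22 : B u2 u2 = 1 := by
          simp only [hu2, add_left, add_right, hvv, hgg, hvW g hgW, hWv g hgW]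
          first
            | ring1
            | linear_combination h2K
            | linear_combination -h2K
        have e12 : B u1 u2 = 0 := by
          simp only [hu1, hu2, add_left, add_right, hvv, hfg, hvW g hgW, hWv f hfW]
          first
            | ring1
            | linear_combination h2K
            | linear_combination -h2K
        have e21 : B u2 u1 = 0 := by rw [← hsym.eq u1 u2]; simpa using e12
        have ev'1 : B v' u1 = 0 := by
          simp only [hv', hu1, add_left, add_right, hvv, hff, hgf,
            hvW f hfW, hWv f hfW, hWv g hgW]
          first
            | ring1
            | linear_combination h2K
            | linear_combination -h2K
        have ev'2 : B v' u2 = 0 := by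
          simp only [hv', hu2, add_left, add_right, hvv, hgg, hfg,
            hvW g hgW, hWv g hgW, hWv f hfW]
          first
            | ring1
            | linear_combination h2K
            | linear_combination -h2K
        have e1v' : B u1 v' = 0 := by rw [← hsym.eq v' u1]; simpa using ev'1
        have e2v' : B u2 v' = 0 := by rw [← hsym.eq v' u2]; simpa using ev'2
        have ev'v' : B v' v' = 1 := by
          simp only [hv', add_left, add_right, hvv, hff, hgg, hfg, hgf,
            hvW f hfW, hWv f hfW, hvW g hgW, hWv g hgW]
          first
            | ring1
            | linear_combination h2K
            | linear_combination -h2K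
        set U : Submodule K V := span K (Set.range ![u1, u2]) with hU
        have hmem1 : u1 ∈ U := subset_span ⟨0, rfl⟩
        have hmem2 : u2 ∈ U := subset_span ⟨1, rfl⟩
        have hUnd : (B.restrict U).Nondegenerate := by
          refine (LinearMap.IsRefl.nondegenerate_iff_separatingLeft (B := B.restrict U) (fun x y h => hsym.isRefl x y h)).mpr ?_
          rintro ⟨x, hx⟩ hb
          obtain ⟨cc, hcc⟩ := (mem_span_range_iff_exists_fun K).mp hx
          have hb1 := hb ⟨u1, hmem1⟩
          have hb2 := hb ⟨u2, hmem2⟩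
          simp only [restrict_apply] at hb1 hb2
          rw [← hcc] at hb1 hb2
          simp [Fin.sum_univ_two, add_left, smul_left, e11, e22, e12, e21] at hb1 hb2
          have : x = 0 := by rw [← hcc]; simp [Fin.sum_univ_two, hb1, hb2]
          simpa using this
        have hcompl := isCompl_orthogonal_of_restrict_nondegenerate hsym.isRefl hUnd
        have hli : LinearIndependent K ![u1, u2] := by
          refine linearIndependent_of_iIsOrtho (B := B) (iIsOrtho_def.mpr ?_) ?_
          · intro i j hij
            fin_cases i <;> fin_cases j
            · exact absurd rfl hij
            · exact e12
            · exact e21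
            · exact absurd rfl hij
          · intro i
            fin_cases i
            · show ¬ B u1 u1 = 0
              rw [e11]; exact one_ne_zero
            · show ¬ B u2 u2 = 0
              rw [e22]; exact one_ne_zero
        have hUr : finrank K U = 2 := by
          rw [hU, finrank_span_eq_card hli]; simp
        set W2 : Submodule K V := B.orthogonal U with hW2
        have hW2r : finrank K W2 = n - 2 := by
          rw [hW2, finrank_orthogonal hnd, hUr, hrank]
        have hW2nd : (B.restrict W2).Nondegenerate := by
          apply nondegenerate_restrict_of_disjoint_orthogonal B hsym.isRefl
          rw [hW2, orthogonal_orthogonal hnd hsym.isRefl]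
          exact hcompl.disjoint.symm
        have hW2sym : (B.restrict W2).IsSymm := by
          constructor; intro x y; simpa [restrict_apply] using hsym.eq x.1 y.1
        have hv'W2 : v' ∈ W2 := by
          rw [hW2, mem_orthogonal_iff]
          intro u hu
          obtain ⟨cc, hcc⟩ := (mem_span_range_iff_exists_fun K).mp hu
          rw [← hcc]
          simp [Fin.sum_univ_two, add_left, smul_left, e1v', e2v']
        obtain ⟨m, rfl⟩ : ∃ m, n = m + 2 := ⟨n - 2, by omega⟩
        obtain ⟨bw, hbw⟩ := IH m (by omega) W2 (by omega) (B.restrict W2) hW2sym hW2nd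
          ⟨⟨v', hv'W2⟩, by simp [restrict_apply, ev'v']⟩
        simp only [restrict_apply] at hbw
        set rest : Fin m → V := fun i => (bw i : V) with hrest
        have hWu : ∀ w ∈ W2, B u1 w = 0 ∧ B u2 w = 0 ∧ B w u1 = 0 ∧ B w u2 = 0 := by
          intro w hw
          have h1 := (mem_orthogonal_iff.mp hw) u1 hmem1
          have h2 := (mem_orthogonal_iff.mp hw) u2 hmem2
          refine ⟨h1, h2, ?_, ?_⟩
          · rw [← hsym.eq u1 w]; simpa using h1
          · rw [← hsym.eq u2 w]; simpa using h2
        have hcons2 : ∀ i j, B ((Fin.cons u2 rest : Fin (m+1) → V) i)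
            ((Fin.cons u2 rest : Fin (m+1) → V) j) = if i = j then 1 else 0 := by
          refine cons_orthonormal B u2 rest e22 ?_ ?_ ?_
          · intro i; exact (hWu _ (bw i).2).2.1
          · intro i; exact (hWu _ (bw i).2).2.2.2
          · exact hbw
        have hcons1 : ∀ i j,
            B ((Fin.cons u1 (Fin.cons u2 rest) : Fin (m+2) → V) i)
              ((Fin.cons u1 (Fin.cons u2 rest) : Fin (m+2) → V) j) =
            if i = j then 1 else 0 := by
          refine cons_orthonormal B u1 (Fin.cons u2 rest) e11 ?_ ?_ hcons2
          · intro i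
            induction i using Fin.cases with
            | zero => simpa using e12
            | succ i => simpa using (hWu _ (bw i).2).1
          · intro i
            induction i using Fin.cases with
            | zero => simpa using e21
            | succ i => simpa using (hWu _ (bw i).2).2.2.1
        exact orthonormal_family_basis (by omega) hrank B _ hcons1
    · -- B is non-alternating on W : use IH on W directly
      push_neg at halt
      obtain ⟨w, hwW, hww⟩ := halt
      obtain ⟨m, rfl⟩ : ∃ m, n = m + 1 := ⟨n - 1, by omega⟩
      obtain ⟨bw, hbw⟩ := IH m (by omega) W (by omega) (B.restrict W) hWsym hWnd
        ⟨⟨w, hwW⟩, by simpa [restrict_apply] using hww⟩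
      simp only [restrict_apply] at hbw
      set rest : Fin m → V := fun i => (bw i : V) with hrest
      have hcons : ∀ i j, B ((Fin.cons v rest : Fin (m+1) → V) i)
          ((Fin.cons v rest : Fin (m+1) → V) j) = if i = j then 1 else 0 := by
        refine cons_orthonormal B v rest hvv ?_ ?_ hbw
        · intro i; exact hvW _ (bw i).2
        · intro i; exact hWv _ (bw i).2
      exact orthonormal_family_basis (by omega) hrank B _ hcons

end Aux

/-- Over a perfect field of characteristic 2, on an odd-dimensional vector space,
any two non-degenerate symmetric bilinear forms are equivalent. -/
theorem odd_dim_nondeg_symm_bilin_equiv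
    (K V : Type*) [Field K] [PerfectField K] [CharP K 2]
    [AddCommGroup V] [Module K V] [FiniteDimensional K V]
    (n : ℕ) (hn : Odd n) (hdim : Module.finrank K V = n)
    (B B' : LinearMap.BilinForm K V)
    (hB : B.IsSymm) (hB' : B'.IsSymm)
    (hBnd : B.Nondegenerate) (hB'nd : B'.Nondegenerate) :
    ∃ M : V ≃ₗ[K] V, ∀ x y : V, B' x y = B (M x) (M y) := by
  have hwit : ∀ C : LinearMap.BilinForm K V, C.IsSymm → C.Nondegenerate →
      ∃ v, C v v ≠ 0 := by
    intro C hCs hCnd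
    by_contra h
    push_neg at h
    have := even_of_alt n V hdim C hCs hCnd h
    exact (Nat.not_even_iff_odd.mpr hn) this
  obtain ⟨b, hb⟩ := exists_orthonormal_basis n V hdim B hB hBnd (hwit B hB hBnd)
  obtain ⟨b', hb'⟩ := exists_orthonormal_basis n V hdim B' hB' hB'nd (hwit B' hB' hB'nd)
  set M : V ≃ₗ[K] V := b'.equiv b (Equiv.refl _) with hM
  refine ⟨M, ?_⟩
  have key : B' = B.compl₁₂ (M : V →ₗ[K] V) (M : V →ₗ[K] V) := by
    apply LinearMap.ext_basis b' b'
    intro i j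
    simp only [LinearMap.compl₁₂_apply, LinearEquiv.coe_coe, hM, Basis.equiv_apply,
      Equiv.refl_apply]
    rw [hb' i j, hb i j]
  intro x y
  rw [key]
  simp [LinearMap.compl₁₂_apply]
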